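/- Let A be a finitely generated totally ordered Abelian group and B a convex subgroup of A. Then A is isomorphic as an ordered group to the lexicographic product (A/B) ×ₗ B. -/

import Mathlib

/-- Auxiliary carrier type: a universe-lifted copy of `Fin n → ℤ` with no
preexisting order instances. -/
def OrderShellC.{w} (n : ℕ) : Type w := ULift.{w} (Fin n → ℤ)

instance OrderShellC.instAddCommGroup.{w} (n : ℕ) : AddCommGroup (OrderShellC.{w} n) :=
  inferInstanceAs (AddCommGroup (ULift (Fin n → ℤ)))

/-- The defining additive equivalence. -/
def OrderShellC.equiv.{w} (n : ℕ) : (Fin n → ℤ) ≃+ OrderShellC.{w} n :=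
  (AddEquiv.ulift (α := Fin n → ℤ)).symm

theorem stmt_1_aux.{u, v} {A : Type u} [AddCommGroup A] [LinearOrder A] [IsOrderedAddMonoid A] (hfg : AddGroup.FG A)
    (B : AddSubgroup A)
    (hconv : ∀ x y : A, y ∈ B → 0 ≤ x → x ≤ y → x ∈ B) :
    ∃ (C : Type v) (_ : AddCommGroup C) (_ : LinearOrder C) (_ : IsOrderedAddMonoid C) (π : A →+ C),
      Function.Surjective π ∧ (∀ x y : A, x ≤ y → π x ≤ π y) ∧ π.ker = B ∧
      ∃ φ : A ≃+ C × B,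
        ∀ x y : A, x ≤ y ↔
          ((φ x).1 < (φ y).1 ∨ ((φ x).1 = (φ y).1 ∧ (φ x).2 ≤ (φ y).2)) := by
  classical
  set Q := A ⧸ B with hQ
  set π : A →+ Q := QuotientAddGroup.mk' B with hπ
  have hπsurj : Function.Surjective π := QuotientAddGroup.mk'_surjective B
  have hker : π.ker = B := QuotientAddGroup.ker_mk' B
  have hmemker : ∀ x : A, π x = 0 ↔ x ∈ B := by
    intro x
    rw [← AddMonoidHom.mem_ker, hker]
  -- Q is torsion free
  have htf : ∀ (n : ℤ) (q : Q), n • q = 0 → n = 0 ∨ q = 0 := by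
    intro n q h
    by_cases hn : n = 0
    · exact Or.inl hn
    right
    obtain ⟨x, rfl⟩ := hπsurj q
    have hB : ∀ m : ℤ, 0 < m → ∀ z : A, m • z ∈ B → z ∈ B := by
      intro m hm z hz
      have key : ∀ w : A, 0 ≤ w → w ≤ m • w := by
        intro w hw
        have h := zsmul_nonneg hw (by omega : (0:ℤ) ≤ m - 1)
        have h2 : w + (m - 1) • w = m • w := by rw [sub_zsmul, one_zsmul]; abel
        calc w = w + 0 := (add_zero w).symm
          _ ≤ w + (m - 1) • w := add_le_add_right h _
          _ = m • w := h2
      rcases le_total 0 z with hz0 | hz0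
      · exact hconv z (m • z) hz hz0 (key z hz0)
      · have hz0' : 0 ≤ -z := neg_nonneg.mpr hz0
        have hmem : m • (-z) ∈ B := by rw [smul_neg]; exact B.neg_mem hz
        have : -z ∈ B := hconv (-z) (m • (-z)) hmem hz0' (key (-z) hz0')
        simpa using B.neg_mem this
    have hnx : n • x ∈ B := by
      rw [← hmemker]
      simpa using h
    rw [hmemker x]
    rcases lt_trichotomy n 0 with hn0 | hn0 | hn0
    · refine hB (-n) (by omega) x ?_
      rw [neg_smul]; exact B.neg_mem hnx
    · omega
    · exact hB n hn0 x hnx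
  haveI : NoZeroSMulDivisors ℤ Q := ⟨fun {n q} h => htf n q h⟩
  haveI : Module.Finite ℤ Q :=
    Module.Finite.iff_addGroup_fg.mpr (AddGroup.fg_of_surjective hπsurj)
  haveI : Module.Free ℤ Q := Module.free_of_finite_type_torsion_free'
  haveI : Module.Projective ℤ Q := Module.Projective.of_free
  -- section
  obtain ⟨s, hs⟩ := Module.projective_lifting_property
    ((QuotientAddGroup.mk' B).toIntLinearMap) (LinearMap.id : Q →ₗ[ℤ] Q)
    hπsurj
  -- identification of Q with ℤ^n, lifted to universe v
  set ι := Module.Free.ChooseBasisIndex ℤ Q with hι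
  set n := Fintype.card ι with hn
  set C : Type v := OrderShellC.{v} n with hC
  set e : Q ≃+ C :=
    (((Module.Free.chooseBasis ℤ Q).equivFun.trans
      (LinearEquiv.piCongrLeft' ℤ (fun _ => ℤ) (Fintype.equivFin ι))).toAddEquiv.trans
      (OrderShellC.equiv n)) with he
  set π₂ : A →+ C := e.toAddMonoidHom.comp π with hπ₂
  set sp : C →+ A := s.toAddMonoidHom.comp e.symm.toAddMonoidHom with hsp
  have hπ₂surj : Function.Surjective π₂ := e.surjective.comp hπsurj
  have hsπ : ∀ q : Q, π (s q) = q := fun q =>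
    congrArg (fun f => f q) (congrArg (fun (f : Q →ₗ[ℤ] Q) => (f : Q → Q)) hs)
  have hsec : ∀ c : C, π₂ (sp c) = c := by
    intro c
    show e (π (s (e.symm c))) = c
    rw [hsπ, e.apply_symm_apply]
  have hmemker₂ : ∀ x : A, π₂ x = 0 ↔ x ∈ B := by
    intro x
    rw [← hmemker x]
    constructor
    · intro h
      have h' : e (π x) = e 0 := by rw [map_zero]; exact h
      exact e.injective h'
    · intro h
      show e (π x) = 0
      rw [h, map_zero]
  have hker₂ : π₂.ker = B := by
    ext x
    rw [AddMonoidHom.mem_ker, hmemker₂]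
  have hrep : ∀ x : A, sp (π₂ x) - x ∈ B := by
    intro x
    rw [← hmemker₂]
    rw [map_sub, hsec, sub_eq_zero]
  -- the order on C
  letI : LinearOrder C :=
    { le := fun q q' => ∃ b ∈ B, sp q ≤ sp q' + b
      le_refl := fun q => ⟨0, B.zero_mem, by simp⟩
      le_trans := by
        rintro a b c ⟨b1, hb1, h1⟩ ⟨b2, hb2, h2⟩
        refine ⟨b1 + b2, B.add_mem hb1 hb2, ?_⟩
        calc sp a ≤ sp b + b1 := h1
          _ ≤ (sp c + b2) + b1 := add_le_add_left h2 _
          _ = sp c + (b1 + b2) := by abel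
      le_antisymm := by
        rintro q q' ⟨b1, hb1, h1⟩ ⟨b2, hb2, h2⟩
        have hd : sp q' - sp q ∈ B := by
          rcases le_total 0 (sp q' - sp q) with h0 | h0
          · exact hconv _ b2 hb2 h0 (sub_le_iff_le_add'.mpr h2)
          · have h0' : 0 ≤ sp q - sp q' := sub_nonneg.mpr (sub_nonpos.mp h0)
            have : sp q - sp q' ∈ B := hconv _ b1 hb1 h0' (sub_le_iff_le_add'.mpr h1)
            have := B.neg_mem this
            rwa [neg_sub] at this
        have : π₂ (sp q' - sp q) = 0 := (hmemker₂ _).mpr hd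
        rw [map_sub, hsec, hsec, sub_eq_zero] at this
        exact this.symm
      le_total := by
        intro q q'
        rcases le_total (sp q) (sp q') with h | h
        · exact Or.inl ⟨0, B.zero_mem, by simpa using h⟩
        · exact Or.inr ⟨0, B.zero_mem, by simpa using h⟩
      toDecidableLE := fun _ _ => Classical.dec _ }
  haveI : IsOrderedAddMonoid C :=
    { add_le_add_left := by
        rintro q q' ⟨b, hb, h⟩ a
        refine ⟨b, hb, ?_⟩
        simp only [map_add]
        calc sp q + sp a ≤ (sp q' + b) + sp a := add_le_add_left h _
          _ = sp q' + sp a + b := by abel }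
  have hmono : ∀ x y : A, x ≤ y → π₂ x ≤ π₂ y := by
    intro x y hxy
    refine ⟨(sp (π₂ x) - x) - (sp (π₂ y) - y), B.sub_mem (hrep x) (hrep y), ?_⟩
    have heq : sp (π₂ y) + ((sp (π₂ x) - x) - (sp (π₂ y) - y)) = y + (sp (π₂ x) - x) := by
      abel
    rw [heq]
    calc sp (π₂ x) = x + (sp (π₂ x) - x) := by abel
      _ ≤ y + (sp (π₂ x) - x) := add_le_add_left hxy _
  have hker2 : ∀ x : A, x - sp (π₂ x) ∈ B := by
    intro x
    have := B.neg_mem (hrep x)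
    simpa using this
  -- the group isomorphism
  refine ⟨C, inferInstance, inferInstance, inferInstance, π₂, hπ₂surj, hmono, hker₂,
    { toFun := fun x => (π₂ x, ⟨x - sp (π₂ x), hker2 x⟩)
      invFun := fun p => sp p.1 + (p.2 : A)
      left_inv := by intro x; simp
      right_inv := by
        rintro ⟨q, b, hb⟩
        have hπb : π₂ b = 0 := (hmemker₂ b).mpr hb
        refine Prod.ext ?_ (Subtype.ext ?_)
        · show π₂ (sp q + b) = q
          rw [map_add, hsec, hπb, add_zero]
        · show (sp q + b) - sp (π₂ (sp q + b)) = b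
          rw [map_add, hsec, hπb, add_zero]
          abel
      map_add' := by
        intro x y
        refine Prod.ext (by simp) (Subtype.ext ?_)
        show (x + y) - sp (π₂ (x + y)) = (x - sp (π₂ x)) + (y - sp (π₂ y))
        rw [map_add, map_add]
        abel }, ?_⟩
  intro x y
  constructor
  · intro hxy
    rcases lt_or_eq_of_le (hmono x y hxy) with h | h
    · exact Or.inl h
    · refine Or.inr ⟨h, Subtype.mk_le_mk.mpr ?_⟩
      show x - sp (π₂ x) ≤ y - sp (π₂ y)
      rw [show π₂ x = π₂ y from h]
      exact sub_le_sub_right hxy _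
  · rintro (h | ⟨h1, h2⟩)
    · by_contra hxy
      push_neg at hxy
      exact absurd (hmono y x hxy.le) (not_le_of_gt h)
    · replace h2 : x - sp (π₂ x) ≤ y - sp (π₂ y) := h2
      replace h1 : π₂ x = π₂ y := h1
      rw [h1] at h2
      have := add_le_add_left h2 (sp (π₂ y))
      simpa using this

/-- A finitely generated totally ordered Abelian group `A` with a convex subgroup `B`
is isomorphic as an ordered group to the lexicographic product `(A/B) ×ₗ B`,
where `A/B` carries the induced order (realized as a linearly ordered group `C`
together with a surjective order-preserving homomorphism `A → C` with kernel `B`). -/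
theorem stmt_1 {A : Type*} [AddCommGroup A] [LinearOrder A] [IsOrderedAddMonoid A] (hfg : AddGroup.FG A)
    (B : AddSubgroup A)
    (hconv : ∀ x y : A, y ∈ B → 0 ≤ x → x ≤ y → x ∈ B) :
    ∃ (C : Type _) (_ : AddCommGroup C) (_ : LinearOrder C) (_ : IsOrderedAddMonoid C) (π : A →+ C),
      Function.Surjective π ∧ (∀ x y : A, x ≤ y → π x ≤ π y) ∧ π.ker = B ∧
      ∃ φ : A ≃+ C × B,
        ∀ x y : A, x ≤ y ↔
          ((φ x).1 < (φ y).1 ∨ ((φ x).1 = (φ y).1 ∧ (φ x).2 ≤ (φ y).2)) := by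
  exact stmt_1_aux hfg B hconv
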